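/- Let $0 < \beta_1$ and $\beta_1^2 < \beta_2 < 1$, let $(a_n)_{n \ge 1}$ be a sequence of real numbers, let $b_0 > 0$, $b_n = \beta_2 b_{n-1} + (1-\beta_2) a_n^2$, and $c_0 = 0$, $c_n = \beta_1 c_{n-1} + (1-\beta_1) a_n$. Then for all $T \ge 1$, $\sum_{n=1}^{T} \frac{c_n^2}{b_n} \le \frac{(1-\beta_1)^2}{(1 - \beta_1/\sqrt{\beta_2})^2 (1-\beta_2)} \left( \ln\frac{b_T}{b_0} - T \ln \beta_2 \right)$. -/

import Mathlib

theorem ema_log_sum_bound (β1 β2 : ℝ) (hβ1 : 0 < β1) (hββ : β1 ^ 2 < β2) (hβ2 : β2 < 1)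
    (a b c : ℕ → ℝ) (hb0 : 0 < b 0)
    (hb : ∀ n : ℕ, 1 ≤ n → b n = β2 * b (n - 1) + (1 - β2) * (a n) ^ 2)
    (hc0 : c 0 = 0) (hc : ∀ n : ℕ, 1 ≤ n → c n = β1 * c (n - 1) + (1 - β1) * a n)
    (T : ℕ) (hT : 1 ≤ T) :
    ∑ n ∈ Finset.Icc 1 T, (c n) ^ 2 / b n ≤
      (1 - β1) ^ 2 / ((1 - β1 / Real.sqrt β2) ^ 2 * (1 - β2)) *
        (Real.log (b T / b 0) - (T : ℝ) * Real.log β2) := by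
  have hβ2pos : 0 < β2 := lt_trans (pow_pos hβ1 2) hββ
  set s : ℝ := Real.sqrt β2 with hs
  have hspos : 0 < s := Real.sqrt_pos.mpr hβ2pos
  have hs2 : s ^ 2 = β2 := Real.sq_sqrt hβ2pos.le
  set ρ : ℝ := β1 / s with hρdef
  have hρpos : 0 < ρ := div_pos hβ1 hspos
  have hρ1 : ρ < 1 := (div_lt_one hspos).mpr ((Real.lt_sqrt hβ1.le).mpr hββ)
  have h1ρ : 0 < 1 - ρ := by linarith
  have h1β2 : 0 < 1 - β2 := by linarith
  have hρs : ρ * s = β1 := div_mul_cancel₀ _ hspos.ne'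
  clear_value s ρ
  clear hs hρdef
  -- positivity of b
  have hbpos : ∀ n, 0 < b n := by
    intro n
    induction n with
    | zero => exact hb0
    | succ m ih =>
      rw [hb (m + 1) (Nat.le_add_left 1 m)]
      simp only [Nat.add_sub_cancel]
      nlinarith [sq_nonneg (a (m + 1))]
  -- geometric lower bound for b
  have hbgeom : ∀ k n : ℕ, k ≤ n → β2 ^ (n - k) * b k ≤ b n := by
    intro k n hkn
    induction n with
    | zero =>
      interval_cases k
      simp
    | succ m ih =>
      rcases Nat.lt_or_ge k (m + 1) with h | h
      · have hkm : k ≤ m := Nat.lt_succ_iff.mp h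
        have h2 := ih hkm
        rw [hb (m + 1) (Nat.le_add_left 1 m)]
        simp only [Nat.add_sub_cancel]
        have hnk : m + 1 - k = (m - k) + 1 := by omega
        rw [hnk, pow_succ]
        nlinarith [sq_nonneg (a (m + 1)), pow_pos hβ2pos (m - k), hbpos k]
      · have hk : k = m + 1 := le_antisymm hkn h
        subst hk
        simp
  -- closed form for c
  have hcf : ∀ n : ℕ, c n = (1 - β1) * ∑ k ∈ Finset.Icc 1 n, β1 ^ (n - k) * a k := by
    intro n
    induction n with
    | zero => simp [hc0]
    | succ m ih =>
      rw [hc (m + 1) (Nat.le_add_left 1 m)]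
      simp only [Nat.add_sub_cancel]
      rw [ih]
      have hinsert : Finset.Icc 1 (m + 1) = insert (m + 1) (Finset.Icc 1 m) := by
        ext x
        simp only [Finset.mem_Icc, Finset.mem_insert]
        omega
      rw [hinsert, Finset.sum_insert (by simp)]
      have hcongr : ∀ k ∈ Finset.Icc 1 m, β1 ^ (m + 1 - k) * a k = β1 * (β1 ^ (m - k) * a k) := by
        intro k hk
        rw [Finset.mem_Icc] at hk
        have : m + 1 - k = (m - k) + 1 := by omega
        rw [this, pow_succ]
        ring
      rw [Finset.sum_congr rfl hcongr, ← Finset.mul_sum]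
      simp only [Nat.sub_self, pow_zero, one_mul]
      ring
  -- Icc sums as range sums
  have hIcc : ∀ (m : ℕ) (f : ℕ → ℝ), ∑ k ∈ Finset.Icc 1 m, f k = ∑ i ∈ Finset.range m, f (1 + i) := by
    intro m f
    rw [← Finset.Ico_add_one_right_eq_Icc, Finset.sum_Ico_eq_sum_range]
    simp
  -- geometric sum bound
  have hgeom : ∀ m : ℕ, ∑ j ∈ Finset.range m, ρ ^ j ≤ 1 / (1 - ρ) := by
    intro m
    rw [le_div_iff₀ h1ρ]
    have h := geom_sum_mul ρ m
    nlinarith [pow_nonneg hρpos.le m]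
  -- geometric sums over Icc
  have hgeom1 : ∀ n : ℕ, ∑ k ∈ Finset.Icc 1 n, ρ ^ (n - k) ≤ 1 / (1 - ρ) := by
    intro n
    rw [hIcc n (fun k => ρ ^ (n - k))]
    have : ∀ i ∈ Finset.range n, ρ ^ (n - (1 + i)) = ρ ^ (n - 1 - i) := by
      intro i hi
      congr 1
      omega
    rw [Finset.sum_congr rfl this, Finset.sum_range_reflect (fun j => ρ ^ j) n]
    exact hgeom n
  have hgeom2 : ∀ k : ℕ, ∑ n ∈ Finset.Icc k T, ρ ^ (n - k) ≤ 1 / (1 - ρ) := by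
    intro k
    rw [← Finset.Ico_add_one_right_eq_Icc, Finset.sum_Ico_eq_sum_range]
    have : ∀ i ∈ Finset.range (T + 1 - k), ρ ^ (k + i - k) = ρ ^ i := by
      intro i _
      congr 1
      omega
    rw [Finset.sum_congr rfl this]
    exact hgeom _
  -- Cauchy-Schwarz step
  have hCS : ∀ n : ℕ, (c n) ^ 2 ≤
      (1 - β1) ^ 2 * ((1 / (1 - ρ)) * ∑ k ∈ Finset.Icc 1 n, ρ ^ (n - k) * (β2 ^ (n - k) * (a k) ^ 2)) := by
    intro n
    rw [hcf n, mul_pow]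
    have key : (∑ k ∈ Finset.Icc 1 n, β1 ^ (n - k) * a k) ^ 2 ≤
        (∑ k ∈ Finset.Icc 1 n, ρ ^ (n - k)) *
          ∑ k ∈ Finset.Icc 1 n, ρ ^ (n - k) * (β2 ^ (n - k) * (a k) ^ 2) := by
      have hcs := Finset.sum_mul_sq_le_sq_mul_sq (Finset.Icc 1 n)
        (fun k => Real.sqrt ρ ^ (n - k))
        (fun k => Real.sqrt ρ ^ (n - k) * s ^ (n - k) * a k)
      have hsqρ : Real.sqrt ρ ^ 2 = ρ := Real.sq_sqrt hρpos.le
      have e1 : ∀ k, Real.sqrt ρ ^ (n - k) * (Real.sqrt ρ ^ (n - k) * s ^ (n - k) * a k)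
          = β1 ^ (n - k) * a k := by
        intro k
        have : Real.sqrt ρ ^ (n - k) * (Real.sqrt ρ ^ (n - k) * s ^ (n - k) * a k)
            = (Real.sqrt ρ ^ 2) ^ (n - k) * s ^ (n - k) * a k := by
          rw [← pow_mul, pow_mul']
          ring
        rw [this, hsqρ, ← mul_pow, hρs]
      have e2 : ∀ k, (Real.sqrt ρ ^ (n - k)) ^ 2 = ρ ^ (n - k) := by
        intro k
        rw [← pow_mul, pow_mul', hsqρ]
      have e3 : ∀ k, (Real.sqrt ρ ^ (n - k) * s ^ (n - k) * a k) ^ 2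
          = ρ ^ (n - k) * (β2 ^ (n - k) * (a k) ^ 2) := by
        intro k
        rw [mul_pow, mul_pow, ← pow_mul, pow_mul', hsqρ, ← pow_mul, pow_mul', hs2]
        ring
      simp only [e1, e2, e3] at hcs
      exact hcs
    have hsum2nonneg : 0 ≤ ∑ k ∈ Finset.Icc 1 n, ρ ^ (n - k) * (β2 ^ (n - k) * (a k) ^ 2) := by
      apply Finset.sum_nonneg
      intro k _
      positivity
    exact mul_le_mul_of_nonneg_left
      (key.trans (mul_le_mul_of_nonneg_right (hgeom1 n) hsum2nonneg)) (sq_nonneg _)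
  -- per-index log bound
  have hlogstep : ∀ k : ℕ, 1 ≤ k → (a k) ^ 2 / b k ≤
      (1 / (1 - β2)) * (Real.log (b k) - Real.log (b (k - 1)) - Real.log β2) := by
    intro k hk
    have hbk := hbpos k
    have hbk1 := hbpos (k - 1)
    have h1 : (1 - β2) * (a k) ^ 2 = b k - β2 * b (k - 1) := by
      have := hb k hk
      linarith
    set x : ℝ := β2 * b (k - 1) / b k with hx
    have hxpos : 0 < x := by positivity
    have hlogx : Real.log x = Real.log β2 + Real.log (b (k - 1)) - Real.log (b k) := by
      rw [hx, Real.log_div (by positivity) hbk.ne', Real.log_mul hβ2pos.ne' hbk1.ne']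
    have hxle : Real.log x ≤ x - 1 := Real.log_le_sub_one_of_pos hxpos
    have hx' : 1 - x ≤ Real.log (b k) - Real.log (b (k - 1)) - Real.log β2 := by
      rw [hlogx] at hxle
      linarith
    have hxb : x * b k = β2 * b (k - 1) := by
      rw [hx, div_mul_cancel₀ _ hbk.ne']
    calc (a k) ^ 2 / b k = (1 / (1 - β2)) * ((1 - β2) * (a k) ^ 2 / b k) := by
          field_simp
      _ = (1 / (1 - β2)) * ((1 - x) * b k / b k) := by
          rw [h1]
          congr 2
          nlinarith [hxb]
      _ = (1 / (1 - β2)) * (1 - x) := by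
          rw [mul_div_cancel_right₀ _ hbk.ne']
      _ ≤ (1 / (1 - β2)) * (Real.log (b k) - Real.log (b (k - 1)) - Real.log β2) := by
          apply mul_le_mul_of_nonneg_left hx' (by positivity)
  -- telescoping sum
  have htel : ∑ k ∈ Finset.Icc 1 T, (Real.log (b k) - Real.log (b (k - 1)) - Real.log β2)
      = Real.log (b T / b 0) - (T : ℝ) * Real.log β2 := by
    rw [hIcc T (fun k => Real.log (b k) - Real.log (b (k - 1)) - Real.log β2)]
    have : ∀ i ∈ Finset.range T, Real.log (b (1 + i)) - Real.log (b (1 + i - 1)) - Real.log β2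
        = (Real.log (b (i + 1)) - Real.log (b i)) - Real.log β2 := by
      intro i _
      have h1 : 1 + i = i + 1 := by omega
      have h2 : i + 1 - 1 = i := by omega
      rw [h1, h2]
    rw [Finset.sum_congr rfl this, Finset.sum_sub_distrib,
      Finset.sum_range_sub (fun i => Real.log (b i)), Finset.sum_const, Finset.card_range,
      Real.log_div (hbpos T).ne' hb0.ne']
    ring
  -- main chain
  set F : ℕ → ℕ → ℝ := fun k n => ρ ^ (n - k) * (β2 ^ (n - k) * (a k) ^ 2 / b n) with hF
  have step1 : ∑ n ∈ Finset.Icc 1 T, (c n) ^ 2 / b n ≤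
      ((1 - β1) ^ 2 * (1 / (1 - ρ))) * ∑ n ∈ Finset.Icc 1 T, ∑ k ∈ Finset.Icc 1 n, F k n := by
    rw [Finset.mul_sum]
    apply Finset.sum_le_sum
    intro n _
    have hbn := hbpos n
    have hdiv : (c n) ^ 2 / b n ≤
        ((1 - β1) ^ 2 * ((1 / (1 - ρ)) * ∑ k ∈ Finset.Icc 1 n, ρ ^ (n - k) * (β2 ^ (n - k) * (a k) ^ 2))) / b n := by
      gcongr
      exact hCS n
    refine hdiv.trans_eq ?_
    rw [mul_assoc, mul_div_assoc, mul_div_assoc, Finset.sum_div]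
    congr 1
    congr 1
    apply Finset.sum_congr rfl
    intro k _
    rw [hF]
    ring
  have step2 : ∑ n ∈ Finset.Icc 1 T, ∑ k ∈ Finset.Icc 1 n, F k n
      = ∑ k ∈ Finset.Icc 1 T, ∑ n ∈ Finset.Icc k T, F k n := by
    rw [Finset.sum_comm' (t' := Finset.Icc 1 T) (s' := fun k => Finset.Icc k T)]
    intro x y
    simp only [Finset.mem_Icc]
    omega
  have step3 : ∀ k ∈ Finset.Icc 1 T, ∑ n ∈ Finset.Icc k T, F k n ≤
      (1 / (1 - ρ)) * ((1 / (1 - β2)) * (Real.log (b k) - Real.log (b (k - 1)) - Real.log β2)) := by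
    intro k hk
    rw [Finset.mem_Icc] at hk
    have hbk := hbpos k
    have inner1 : ∑ n ∈ Finset.Icc k T, F k n ≤ ∑ n ∈ Finset.Icc k T, ρ ^ (n - k) * ((a k) ^ 2 / b k) := by
      apply Finset.sum_le_sum
      intro n hn
      rw [Finset.mem_Icc] at hn
      rw [hF]
      have hbn := hbpos n
      have hgb := hbgeom k n hn.1
      have : β2 ^ (n - k) * (a k) ^ 2 / b n ≤ (a k) ^ 2 / b k := by
        rw [div_le_div_iff₀ hbn hbk]
        nlinarith [sq_nonneg (a k), pow_pos hβ2pos (n - k)]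
      exact mul_le_mul_of_nonneg_left this (by positivity)
    have inner2 : ∑ n ∈ Finset.Icc k T, ρ ^ (n - k) * ((a k) ^ 2 / b k)
        ≤ (1 / (1 - ρ)) * ((a k) ^ 2 / b k) := by
      rw [← Finset.sum_mul]
      apply mul_le_mul_of_nonneg_right (hgeom2 k) (by positivity)
    have inner3 : (1 / (1 - ρ)) * ((a k) ^ 2 / b k)
        ≤ (1 / (1 - ρ)) * ((1 / (1 - β2)) * (Real.log (b k) - Real.log (b (k - 1)) - Real.log β2)) :=
      mul_le_mul_of_nonneg_left (hlogstep k hk.1) (by positivity)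
    exact inner1.trans (inner2.trans inner3)
  have step4 : ∑ k ∈ Finset.Icc 1 T, ∑ n ∈ Finset.Icc k T, F k n ≤
      (1 / (1 - ρ)) * ((1 / (1 - β2)) * (Real.log (b T / b 0) - (T : ℝ) * Real.log β2)) := by
    calc ∑ k ∈ Finset.Icc 1 T, ∑ n ∈ Finset.Icc k T, F k n
        ≤ ∑ k ∈ Finset.Icc 1 T, (1 / (1 - ρ)) * ((1 / (1 - β2)) * (Real.log (b k) - Real.log (b (k - 1)) - Real.log β2)) :=
          Finset.sum_le_sum step3
      _ = (1 / (1 - ρ)) * ((1 / (1 - β2)) * ∑ k ∈ Finset.Icc 1 T, (Real.log (b k) - Real.log (b (k - 1)) - Real.log β2)) := by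
          rw [← Finset.mul_sum, ← Finset.mul_sum]
      _ = (1 / (1 - ρ)) * ((1 / (1 - β2)) * (Real.log (b T / b 0) - (T : ℝ) * Real.log β2)) := by
          rw [htel]
  have hconst : ((1 - β1) ^ 2 * (1 / (1 - ρ))) * ((1 / (1 - ρ)) * (1 / (1 - β2)))
      = (1 - β1) ^ 2 / ((1 - ρ) ^ 2 * (1 - β2)) := by
    rw [eq_div_iff (by positivity)]
    field_simp
  have hmono : ((1 - β1) ^ 2 * (1 / (1 - ρ))) * ∑ n ∈ Finset.Icc 1 T, ∑ k ∈ Finset.Icc 1 n, F k n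
      ≤ (1 - β1) ^ 2 / ((1 - ρ) ^ 2 * (1 - β2)) * (Real.log (b T / b 0) - (T : ℝ) * Real.log β2) := by
    rw [step2]
    calc ((1 - β1) ^ 2 * (1 / (1 - ρ))) * ∑ k ∈ Finset.Icc 1 T, ∑ n ∈ Finset.Icc k T, F k n
        ≤ ((1 - β1) ^ 2 * (1 / (1 - ρ))) *
            ((1 / (1 - ρ)) * ((1 / (1 - β2)) * (Real.log (b T / b 0) - (T : ℝ) * Real.log β2))) :=
          mul_le_mul_of_nonneg_left step4 (by positivity)
      _ = (((1 - β1) ^ 2 * (1 / (1 - ρ))) * ((1 / (1 - ρ)) * (1 / (1 - β2)))) *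
            (Real.log (b T / b 0) - (T : ℝ) * Real.log β2) := by ring
      _ = (1 - β1) ^ 2 / ((1 - ρ) ^ 2 * (1 - β2)) * (Real.log (b T / b 0) - (T : ℝ) * Real.log β2) := by
          rw [hconst]
  exact step1.trans hmono
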